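/- arXiv:1411.3070 — 2 statements merged into one kernel-verified Lean document; each statement's English description precedes it below -/
import Mathlib

section
/- For all real x ≥ 1, log Γ(x) ≥ (x - γ)·log(x) - x + 1, where γ = 0.57722... is the Euler–Mascheroni constant. -/
set_option maxHeartbeats 1000000

open Real Filter Set Finset

namespace LGB



/-! ### Generic monotonicity helpers -/

lemma monoOn_of_hasDerivAt {f f' : ℝ → ℝ} {D : Set ℝ} (hD : Convex ℝ D)
    (hd : ∀ x ∈ D, HasDerivAt f (f' x) x) (h0 : ∀ x ∈ interior D, 0 ≤ f' x) :
    MonotoneOn f D := by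
  apply monotoneOn_of_deriv_nonneg hD
  · intro x hx; exact (hd x hx).continuousAt.continuousWithinAt
  · intro x hx; exact ((hd x (interior_subset hx)).differentiableAt).differentiableWithinAt
  · intro x hx; rw [(hd x (interior_subset hx)).deriv]; exact h0 x hx

/-! ### Elementary log bounds -/

lemma hasDerivAt_log_shift {t : ℝ} (ht : -1 < t) :
    HasDerivAt (fun t : ℝ => Real.log (1 + t)) ((1 + t)⁻¹) t := by
  have h1 : HasDerivAt (fun t : ℝ => 1 + t) 1 t := by
    simpa using (hasDerivAt_id t).const_add 1
  simpa [Function.comp_def] using (Real.hasDerivAt_log (by linarith)).comp t h1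

/-- `log (1+t) ≥ t - t²/2` for `t ≥ 0`. -/
lemma log_ge_quad {t : ℝ} (ht : 0 ≤ t) : t - t ^ 2 / 2 ≤ Real.log (1 + t) := by
  have hmono : MonotoneOn (fun t : ℝ => Real.log (1 + t) - (t - t ^ 2 / 2)) (Set.Ici 0) := by
    apply monoOn_of_hasDerivAt (convex_Ici 0) (f' := fun t => (1 + t)⁻¹ - (1 - t))
    · intro x hx
      simp only [Set.mem_Ici] at hx
      have h3 : HasDerivAt (fun t : ℝ => t - t ^ 2 / 2) (1 - x) x := by
        simpa using (hasDerivAt_id x).fun_sub ((hasDerivAt_pow 2 x).div_const 2)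
      exact (hasDerivAt_log_shift (by linarith)).sub h3
    · intro x hx
      rw [interior_Ici] at hx
      simp only [Set.mem_Ioi] at hx
      have h1 : (0:ℝ) < 1 + x := by linarith
      have h2 : (1 + x)⁻¹ * (1 + x) = 1 := inv_mul_cancel₀ (by positivity)
      nlinarith [sq_nonneg x, mul_pos (inv_pos.2 h1) h1]
  have := hmono (Set.self_mem_Ici) (Set.mem_Ici.2 ht) ht
  simp only [Real.log_one, add_zero, sub_zero] at this
  simp at this
  linarith

/-- `log (1+t) ≤ t (t+2) / (2 (t+1))` for `t ≥ 0`  (trapezoid bound). -/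
lemma log_le_trap {t : ℝ} (ht : 0 ≤ t) : Real.log (1 + t) ≤ (t ^ 2 + 2 * t) / (2 * t + 2) := by
  have hmono : MonotoneOn
      (fun t : ℝ => (t ^ 2 + 2 * t) / (2 * t + 2) - Real.log (1 + t)) (Set.Ici 0) := by
    apply monoOn_of_hasDerivAt (convex_Ici 0)
      (f' := fun t => ((2 * t + 2) * (2 * t + 2) - (t ^ 2 + 2 * t) * 2) / (2 * t + 2) ^ 2
        - (1 + t)⁻¹)
    · intro x hx
      simp only [Set.mem_Ici] at hx
      have hne : (2 * x + 2) ≠ 0 := by positivity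
      have h1 : HasDerivAt (fun t : ℝ => t ^ 2 + 2 * t) (2 * x + 2) x := by
        simpa [mul_comm] using (hasDerivAt_pow 2 x).fun_add ((hasDerivAt_id x).const_mul 2)
      have h2 : HasDerivAt (fun t : ℝ => 2 * t + 2) 2 x := by
        simpa using ((hasDerivAt_id x).const_mul 2).add_const 2
      exact (h1.div h2 hne).sub (hasDerivAt_log_shift (by linarith))
    · intro x hx
      rw [interior_Ici] at hx
      simp only [Set.mem_Ioi] at hx
      have h1 : (0:ℝ) < 1 + x := by linarith
      have h2 : (0:ℝ) < 2 * x + 2 := by linarith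
      have e3 : (2 * x + 2) ^ 2 * (1 + x)⁻¹ = 4 * (1 + x) := by
        field_simp
        ring
      rw [sub_nonneg, le_div_iff₀ (by positivity), mul_comm]
      rw [e3]
      nlinarith [sq_nonneg x]
  have := hmono (Set.self_mem_Ici) (Set.mem_Ici.2 ht) ht
  simp at this
  linarith

/-- `log ((1+w)/(1-w)) ≥ 2w + 2w³/3` for `0 ≤ w < 1`. -/
lemma log_ratio_ge_cubic {w : ℝ} (h0 : 0 ≤ w) (h1 : w < 1) :
    2 * w + 2 * w ^ 3 / 3 ≤ Real.log (1 + w) - Real.log (1 - w) := by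
  have hmono : MonotoneOn
      (fun w : ℝ => Real.log (1 + w) - Real.log (1 - w) - (2 * w + 2 * w ^ 3 / 3))
      (Set.Ico (0:ℝ) 1) := by
    apply monoOn_of_hasDerivAt (convex_Ico 0 1)
      (f' := fun w => (1 + w)⁻¹ + (1 - w)⁻¹ - (2 + 2 * w ^ 2))
    · intro x hx
      simp only [Set.mem_Ico] at hx
      have ha : HasDerivAt (fun w : ℝ => Real.log (1 - w)) (-(1 - x)⁻¹) x := by
        have h2 : HasDerivAt (fun w : ℝ => 1 - w) (-1) x := by
          simpa using (hasDerivAt_id x).const_sub 1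
        simpa [Function.comp_def] using (Real.hasDerivAt_log (by linarith)).comp x h2
      have hb : HasDerivAt (fun w : ℝ => 2 * w + 2 * w ^ 3 / 3) (2 + 2 * x ^ 2) x := by
        have := ((hasDerivAt_id x).const_mul 2).fun_add
          ((((hasDerivAt_pow 3 x).const_mul 2)).div_const 3)
        refine this.congr_deriv ?_
        ring
      have := ((hasDerivAt_log_shift (by linarith)).fun_sub ha).fun_sub hb
      refine this.congr_deriv ?_
      ring
    · intro x hx
      rw [interior_Ico] at hx
      obtain ⟨hx0, hx1⟩ := hx
      have h1 : (0:ℝ) < 1 + x := by linarith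
      have h2 : (0:ℝ) < 1 - x := by linarith
      have e3 : (1 + x)⁻¹ + (1 - x)⁻¹ = 2 / ((1 + x) * (1 - x)) := by
        field_simp
        ring
      rw [sub_nonneg, e3, le_div_iff₀ (by nlinarith)]
      nlinarith [sq_nonneg (x ^ 2), sq_nonneg x]
  have := hmono (Set.mem_Ico.2 ⟨le_refl 0, one_pos⟩) (Set.mem_Ico.2 ⟨h0, h1⟩) h0
  simp at this
  linarith





-- dummy stand-ins for part1 results (already proved)
/-- `log (k+1) - log k = log (1 + 1/k)` -/
lemma log_succ_sub {k : ℝ} (hk : 0 < k) :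
    Real.log (k + 1) - Real.log k = Real.log (1 + 1 / k) := by
  rw [← Real.log_div (by positivity) (ne_of_gt hk)]
  congr 1
  field_simp

lemma ak_upper {k : ℝ} (hk : 2 ≤ k) :
    1 / (k:ℝ) - (Real.log (k + 1) - Real.log k) ≤ 1 / (2 * ((k:ℝ) - 1)) - 1 / (2 * k) := by
  have hk0 : (0:ℝ) < k := by linarith
  have hk1 : (1:ℝ) ≤ (k:ℝ) - 1 := by linarith
  rw [log_succ_sub hk0]
  have h := log_ge_quad (t := 1 / (k:ℝ)) (by positivity)
  have h2 : 1 / (k:ℝ) - (1 / (k:ℝ)) ^ 2 / 2 ≥ 1 / (k:ℝ) - (1 / (2 * ((k:ℝ) - 1)) - 1 / (2 * k)) := by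
    rw [ge_iff_le, sub_le_sub_iff_left]
    rw [div_pow, one_pow, div_div]
    rw [div_sub_div _ _ (by positivity) (by positivity : (2:ℝ) * k ≠ 0)]
    rw [div_le_div_iff₀ (by positivity) (by positivity)]
    ring_nf
    nlinarith [hk0, hk1]
  linarith
lemma ak_lower {k : ℝ} (hk : 1 ≤ k) :
    1 / (2 * (k:ℝ)) - 1 / (2 * (k + 1)) ≤ 1 / (k:ℝ) - (Real.log (k + 1) - Real.log k) := by
  have hk0 : (0:ℝ) < k := by linarith
  rw [log_succ_sub hk0]
  have h := log_le_trap (t := 1 / (k:ℝ)) (by positivity)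
  have h2 : ((1 / (k:ℝ)) ^ 2 + 2 * (1 / k)) / (2 * (1 / k) + 2)
      ≤ 1 / (k:ℝ) - (1 / (2 * (k:ℝ)) - 1 / (2 * (k + 1))) := by
    rw [div_le_iff₀ (by positivity)]
    have e1 : 1 / (2 * (k:ℝ)) - 1 / (2 * (k + 1)) = 1 / (2 * k * (k+1)) := by
      field_simp
      ring
    rw [e1]
    field_simp
    ring_nf
    nlinarith [hk0]
  linarith

lemma seq_succ (n : ℕ) : eulerMascheroniSeq (n + 1) =
    eulerMascheroniSeq n + (1 / ((n:ℝ)+1) - (Real.log ((n:ℝ) + 2) - Real.log ((n:ℝ)+1))) := by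
  simp only [eulerMascheroniSeq, harmonic_succ]
  push_cast
  ring_nf

lemma seq_upper (m : ℕ) :
    eulerMascheroniSeq (31 + m) ≤ eulerMascheroniSeq 31 + (1/62 - 1 / (2 * ((31:ℝ) + m))) := by
  induction m with
  | zero => norm_num
  | succ m ih =>
    have hub := ak_upper (k := (31:ℝ) + m + 1) (by push_cast; linarith [Nat.cast_nonneg (α := ℝ) m])
    rw [show (31:ℝ)+m+1+1 = 31+m+2 by ring, show (31:ℝ)+m+1-1 = 31+m by ring] at hub
    have : eulerMascheroniSeq (31 + (m+1)) = eulerMascheroniSeq (31 + m)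
        + (1 / ((31:ℝ) + m + 1) - (Real.log ((31:ℝ) + m + 2) - Real.log ((31:ℝ) + m + 1))) := by
      rw [show 31 + (m+1) = (31 + m) + 1 from rfl, seq_succ (31 + m)]
      push_cast
      ring_nf
    rw [this]
    push_cast
    rw [show (31:ℝ)+(↑m+1) = 31+↑m+1 by ring]
    linarith [ih]

lemma seq_lower (m : ℕ) :
    eulerMascheroniSeq 31 + (1/64 - 1 / (2 * ((32:ℝ) + m))) ≤ eulerMascheroniSeq (31 + m) := by
  induction m with
  | zero => norm_num
  | succ m ih =>
    have hlb := ak_lower (k := (31:ℝ) + m + 1) (by push_cast; linarith [Nat.cast_nonneg (α := ℝ) m])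
    rw [show (31:ℝ)+m+1+1 = 31+m+2 by ring] at hlb
    have : eulerMascheroniSeq (31 + (m+1)) = eulerMascheroniSeq (31 + m)
        + (1 / ((31:ℝ) + m + 1) - (Real.log ((31:ℝ) + m + 2) - Real.log ((31:ℝ) + m + 1))) := by
      rw [show 31 + (m+1) = (31 + m) + 1 from rfl, seq_succ (31 + m)]
      push_cast
      ring_nf
    rw [this]
    push_cast
    rw [show (32:ℝ)+(↑m+1) = 31+↑m+2 by ring]
    push_cast at ih
    rw [show (32:ℝ)+↑m = 31+↑m+1 by ring] at ih
    linarith [hlb]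

lemma gamma_le : eulerMascheroniConstant ≤ eulerMascheroniSeq 31 + 1/62 := by
  apply le_of_tendsto tendsto_eulerMascheroniSeq
  filter_upwards [eventually_ge_atTop 31] with n hn
  obtain ⟨m, rfl⟩ := Nat.exists_eq_add_of_le hn
  have := seq_upper m
  have h2 : (0:ℝ) < 2 * ((31:ℝ) + m) := by positivity
  have h3 : 0 < 1 / (2 * ((31:ℝ) + m)) := by positivity
  linarith

lemma gamma_ge : eulerMascheroniSeq 31 + 1/64 ≤ eulerMascheroniConstant := by
  have hlim : Tendsto (fun m : ℕ => eulerMascheroniSeq 31 + (1/64 - 1 / (2 * ((32:ℝ) + m))))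
      atTop (nhds (eulerMascheroniSeq 31 + 1/64)) := by
    have h1 : Tendsto (fun m : ℕ => 1 / (2 * ((32:ℝ) + m))) atTop (nhds 0) := by
      simp only [one_div]
      apply Tendsto.inv_tendsto_atTop
      apply Tendsto.const_mul_atTop (by norm_num : (0:ℝ) < 2)
      exact tendsto_atTop_add_const_left _ _ tendsto_natCast_atTop_atTop
    have h2 := (tendsto_const_nhds (x := (1:ℝ)/64) (f := atTop (α := ℕ))).sub h1
    have h3 := (tendsto_const_nhds (x := eulerMascheroniSeq 31) (f := atTop (α := ℕ))).add h2
    simpa using h3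
  have hseq : Tendsto (fun m : ℕ => eulerMascheroniSeq (31 + m)) atTop (nhds eulerMascheroniConstant) := by
    have := tendsto_eulerMascheroniSeq.comp (tendsto_add_atTop_nat 31)
    have he : (fun m : ℕ => eulerMascheroniSeq (31 + m)) = (eulerMascheroniSeq ∘ fun m : ℕ => m + 31) := by
      funext m
      simp [Nat.add_comm]
    rw [he]
    exact this
  exact le_of_tendsto_of_tendsto' hlim hseq seq_lower

lemma harmonic31 : (harmonic 31 : ℚ) = 290774257297357/72201776446800 := by
  norm_num [harmonic, Finset.sum_range_succ]

lemma seq31 : eulerMascheroniSeq 31 = (290774257297357/72201776446800 : ℝ) - 5 * Real.log 2 := by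
  rw [eulerMascheroniSeq, harmonic31]
  norm_num
  rw [show (32:ℝ) = 2^5 by norm_num, Real.log_pow]
  norm_num

lemma gamma_lt_num : eulerMascheroniConstant < 0.57764 := by
  have h := gamma_le
  rw [seq31] at h
  have := Real.log_two_gt_d9
  norm_num at h ⊢
  linarith

lemma gamma_gt_num : (0.57713:ℝ) < eulerMascheroniConstant := by
  have h := gamma_ge
  rw [seq31] at h
  have := Real.log_two_lt_d9
  norm_num at h ⊢
  linarith





noncomputable def beta (s : ℝ) : ℝ := Real.log (s+1) - Real.log s - (s+1)⁻¹
noncomputable def beta' (s : ℝ) : ℝ := ((s+1)^2)⁻¹ - (s⁻¹ - (s+1)⁻¹)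

lemma hasDerivAt_beta {s : ℝ} (hs : 0 < s) : HasDerivAt beta (beta' s) s := by
  have h1 : HasDerivAt (fun s : ℝ => Real.log (s+1)) ((s+1)⁻¹) s := by
    simpa [Function.comp_def] using (Real.hasDerivAt_log (by positivity)).comp s ((hasDerivAt_id s).add_const 1)
  have h2 : HasDerivAt Real.log s⁻¹ s := Real.hasDerivAt_log (ne_of_gt hs)
  have h3 : HasDerivAt (fun s : ℝ => (s+1)⁻¹) (-(((s+1))^2)⁻¹) s := by
    simpa [Function.comp_def] using (hasDerivAt_inv (by positivity)).comp s ((hasDerivAt_id s).add_const 1)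
  have := (h1.fun_sub h2).fun_sub h3
  refine this.congr_deriv ?_
  simp [beta']
  ring

lemma hasDerivAt_B {s : ℝ} (hs : 0 < s) :
    HasDerivAt (fun s : ℝ => s * (Real.log (s+1) - Real.log s)) (beta s) s := by
  have h1 : HasDerivAt (fun s : ℝ => Real.log (s+1)) ((s+1)⁻¹) s := by
    simpa [Function.comp_def] using (Real.hasDerivAt_log (by positivity)).comp s ((hasDerivAt_id s).add_const 1)
  have h2 : HasDerivAt Real.log s⁻¹ s := Real.hasDerivAt_log (ne_of_gt hs)
  have := (hasDerivAt_id s).fun_mul (h1.fun_sub h2)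
  refine this.congr_deriv ?_
  have e1 : s * ((s+1)⁻¹ - s⁻¹) = -(s+1)⁻¹ := by
    field_simp
    ring
  simp only [beta, id_eq, one_mul]
  rw [e1]
  ring

/-- termwise bound for the region `v ≥ 7/4` -/
lemma rho_nonneg {v : ℝ} (hv : 7/4 ≤ v) :
    (42287/100000 : ℝ) * (v⁻¹ - (v+1)⁻¹) ≤ beta v := by
  have hv0 : (0:ℝ) < v := by linarith
  set w : ℝ := (2*v+1)⁻¹ with hw
  have hw0 : 0 ≤ w := by positivity
  have hw1 : w < 1 := by
    rw [hw]
    rw [inv_lt_one_iff₀]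
    right
    linarith
  have key := log_ratio_ge_cubic hw0 hw1
  have e1 : (1:ℝ) + w = (2*(v+1))/(2*v+1) := by
    rw [hw]; field_simp; try ring
  have e2 : (1:ℝ) - w = (2*v)/(2*v+1) := by
    rw [hw]; field_simp; try ring
  have e3 : Real.log (1+w) - Real.log (1-w) = Real.log (v+1) - Real.log v := by
    rw [e1, e2, Real.log_div (by positivity) (by positivity),
      Real.log_div (by positivity) (by positivity),
      show 2*(v+1) = 2*(v+1) from rfl, Real.log_mul (by norm_num) (by positivity),
      Real.log_mul (by norm_num) (by positivity)]
    ring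
  rw [e3] at key
  have hnum : (0:ℝ) ≤ 185112*v^3 - 122332*v^2 - 261166*v - 126861 := by
    have h := sub_nonneg.2 hv
    nlinarith [mul_nonneg (mul_nonneg h h) h, mul_nonneg h h]
  have e4 : 2*w + 2*w^3/3 - ((v+1)⁻¹ + (42287/100000 : ℝ) * (v⁻¹ - (v+1)⁻¹))
      = (185112*v^3 - 122332*v^2 - 261166*v - 126861) / (300000 * (v * (v+1) * (2*v+1)^3)) := by
    rw [hw]
    field_simp
    ring
  have e5 : (0:ℝ) ≤ 2*w + 2*w^3/3 - ((v+1)⁻¹ + (42287/100000 : ℝ) * (v⁻¹ - (v+1)⁻¹)) := by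
    rw [e4]
    apply div_nonneg hnum
    positivity
  simp only [beta]
  linarith

/-- telescoping inverse sums -/
lemma sum_inv_tele (a : ℝ) (n : ℕ) :
    ∑ j ∈ Finset.range n, ((a+j)⁻¹ - (a+j+1)⁻¹) = a⁻¹ - (a+n)⁻¹ := by
  have h := Finset.sum_range_sub' (f := fun j : ℕ => (a + j)⁻¹) n
  have e0 : ((0:ℕ):ℝ) = 0 := by norm_num
  rw [e0, add_zero] at h
  rw [← h]
  apply Finset.sum_congr rfl
  intro j hj
  push_cast
  ring_nf


noncomputable def T (n : ℕ) (u : ℝ) : ℝ := ∑ j ∈ Finset.range n, beta (u + j)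
noncomputable def T' (n : ℕ) (u : ℝ) : ℝ := ∑ j ∈ Finset.range n, beta' (u + j)

lemma hasDerivAt_T (n : ℕ) {u : ℝ} (hu : 0 < u) :
    HasDerivAt (fun u => T n u) (T' n u) u := by
  apply HasDerivAt.fun_sum
  intro j hj
  have h : HasDerivAt (fun u : ℝ => u + j) 1 u := (hasDerivAt_id u).add_const (j:ℝ)
  have := (hasDerivAt_beta (s := u + j) (by positivity)).comp u h
  simpa [Function.comp_def] using this

/-- key lower bound for `T'` using the telescoping comparison with parameter `c` -/
lemma T'_ge (n : ℕ) (c : ℝ) (hc : 0 ≤ c) (hc1 : c ≤ 1) {u : ℝ} (hu : 0 < u)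
    (hper : ∀ j : ℕ, (u+j+1-c)⁻¹ - (u+j+1-c+1)⁻¹ ≤ ((u+j+1)^2)⁻¹) :
    (u+1-c)⁻¹ - u⁻¹ ≤ T' n u := by
  have e1 : T' n u = ∑ j ∈ Finset.range n, ((u+j+1)^2)⁻¹
      - ∑ j ∈ Finset.range n, ((u+j)⁻¹ - (u+j+1)⁻¹) := by
    rw [← Finset.sum_sub_distrib]
    apply Finset.sum_congr rfl
    intro j hj
    simp [beta']
  have e2 : ∑ j ∈ Finset.range n, ((u+j)⁻¹ - (u+j+1)⁻¹) = u⁻¹ - (u+n)⁻¹ := sum_inv_tele u n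
  have e3 : ∑ j ∈ Finset.range n, (((u+1-c)+j)⁻¹ - ((u+1-c)+j+1)⁻¹) = (u+1-c)⁻¹ - (u+1-c+n)⁻¹ :=
    sum_inv_tele (u+1-c) n
  have h4 : ∑ j ∈ Finset.range n, (((u+1-c)+j)⁻¹ - ((u+1-c)+j+1)⁻¹)
      ≤ ∑ j ∈ Finset.range n, ((u+j+1)^2)⁻¹ := by
    apply Finset.sum_le_sum
    intro j hj
    have := hper j
    have e : (u+1-c)+j = u+j+1-c := by ring
    rw [e]
    convert this using 3
  have h5 : (u+1-c+(n:ℝ))⁻¹ ≤ (u+(n:ℝ))⁻¹ := by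
    apply inv_anti₀ (by positivity)
    linarith
  linarith


lemma per_c1 {s : ℝ} (hs : 2 ≤ s) : (s-2/5)⁻¹ - (s-2/5+1)⁻¹ ≤ (s^2)⁻¹ := by
  have h1 : (0:ℝ) < s - 2/5 := by linarith
  have h2 : (0:ℝ) < s - 2/5 + 1 := by linarith
  rw [inv_sub_inv (ne_of_gt h1) (ne_of_gt h2), inv_eq_one_div,
    div_le_div_iff₀ (by positivity) (by positivity)]
  nlinarith

lemma per_c2 {s : ℝ} (hs : 12/5 ≤ s) : (s-89/200)⁻¹ - (s-89/200+1)⁻¹ ≤ (s^2)⁻¹ := by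
  have h1 : (0:ℝ) < s - 89/200 := by linarith
  have h2 : (0:ℝ) < s - 89/200 + 1 := by linarith
  rw [inv_sub_inv (ne_of_gt h1) (ne_of_gt h2), inv_eq_one_div,
    div_le_div_iff₀ (by positivity) (by positivity)]
  nlinarith

lemma cov1 {u : ℝ} (h1 : 1 ≤ u) (h2 : u ≤ 7/5) :
    u⁻¹ - (u+1-2/5)⁻¹ ≤ (42236/100000 : ℝ) * (u^2)⁻¹ := by
  have h0 : (0:ℝ) < u := by linarith
  have h3 : (0:ℝ) < u + 1 - 2/5 := by linarith
  rw [inv_sub_inv (ne_of_gt h0) (ne_of_gt h3), inv_eq_one_div, mul_one_div,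
    div_le_div_iff₀ (by positivity) (by positivity)]
  nlinarith

lemma cov2 {u : ℝ} (h1 : 7/5 ≤ u) (h2 : u ≤ 7/4) :
    u⁻¹ - (u+1-89/200)⁻¹ ≤ (42236/100000 : ℝ) * (u^2)⁻¹ := by
  have h0 : (0:ℝ) < u := by linarith
  have h3 : (0:ℝ) < u + 1 - 89/200 := by linarith
  rw [inv_sub_inv (ne_of_gt h0) (ne_of_gt h3), inv_eq_one_div, mul_one_div,
    div_le_div_iff₀ (by positivity) (by positivity)]
  nlinarith

lemma hasDerivAt_F (n : ℕ) (b : ℝ) {x : ℝ} (hx : 0 < x) :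
    HasDerivAt (fun u => T n u - b * u⁻¹) (T' n x + b * (x^2)⁻¹) x := by
  have h1 := (hasDerivAt_T n hx).fun_sub ((hasDerivAt_inv (ne_of_gt hx)).const_mul b)
  refine h1.congr_deriv ?_
  ring

lemma Fmono1 (n : ℕ) {b : ℝ} (hb : 42236/100000 ≤ b) :
    MonotoneOn (fun u => T n u - b * u⁻¹) (Set.Icc 1 (7/5)) := by
  apply monoOn_of_hasDerivAt (convex_Icc _ _) (f' := fun x => T' n x + b * (x^2)⁻¹)
  · intro x hx
    exact hasDerivAt_F n b (by linarith [hx.1])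
  · intro x hx
    rw [interior_Icc] at hx
    obtain ⟨hx1, hx2⟩ := hx
    have hx0 : (0:ℝ) < x := by linarith
    have hT' := T'_ge n (2/5) (by norm_num) (by norm_num) hx0 (fun j => by
      have hj : (0:ℝ) ≤ (j:ℝ) := Nat.cast_nonneg j
      have := per_c1 (s := x + j + 1) (by linarith)
      convert this using 2 <;> ring)
    have hcov := cov1 hx1.le hx2.le
    have hmul : (42236/100000 : ℝ) * (x^2)⁻¹ ≤ b * (x^2)⁻¹ :=
      mul_le_mul_of_nonneg_right hb (by positivity)
    linarith

lemma Fmono2 (n : ℕ) {b : ℝ} (hb : 42236/100000 ≤ b) :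
    MonotoneOn (fun u => T n u - b * u⁻¹) (Set.Icc (7/5) (7/4)) := by
  apply monoOn_of_hasDerivAt (convex_Icc _ _) (f' := fun x => T' n x + b * (x^2)⁻¹)
  · intro x hx
    exact hasDerivAt_F n b (by linarith [hx.1])
  · intro x hx
    rw [interior_Icc] at hx
    obtain ⟨hx1, hx2⟩ := hx
    have hx0 : (0:ℝ) < x := by linarith
    have hT' := T'_ge n (89/200) (by norm_num) (by norm_num) hx0 (fun j => by
      have hj : (0:ℝ) ≤ (j:ℝ) := Nat.cast_nonneg j
      have := per_c2 (s := x + j + 1) (by linarith)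
      convert this using 2 <;> ring)
    have hcov := cov2 hx1.le hx2.le
    have hmul : (42236/100000 : ℝ) * (x^2)⁻¹ ≤ b * (x^2)⁻¹ :=
      mul_le_mul_of_nonneg_right hb (by positivity)
    linarith

lemma F_ge_F_one (n : ℕ) {b u : ℝ} (hb : 42236/100000 ≤ b) (h1 : 1 ≤ u) (h2 : u ≤ 7/4) :
    T n 1 - b ≤ T n u - b * u⁻¹ := by
  have h0 : T n 1 - b * (1:ℝ)⁻¹ = T n 1 - b := by norm_num
  rcases le_or_gt u (7/5) with h | h
  · have := Fmono1 n hb (Set.mem_Icc.2 ⟨le_refl 1, by norm_num⟩) (Set.mem_Icc.2 ⟨h1, h⟩) h1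
    simpa using this
  · have ha := Fmono1 n hb (Set.mem_Icc.2 ⟨le_refl 1, by norm_num⟩)
      (Set.mem_Icc.2 ⟨by norm_num, le_refl (7/5:ℝ)⟩) (by norm_num)
    have hc := Fmono2 n hb (Set.mem_Icc.2 ⟨le_refl (7/5:ℝ), by norm_num⟩)
      (Set.mem_Icc.2 ⟨h.le, h2⟩) h.le
    simp only at ha hc
    have := le_trans ha hc
    simpa using this

lemma T_at_one (n : ℕ) : T n 1 = 1 + Real.log ((n:ℝ)+1) - ((harmonic (n+1) : ℚ) : ℝ) := by
  induction n with
  | zero =>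
    simp only [T, Finset.range_zero, Finset.sum_empty]
    norm_num [harmonic]
  | succ n ih =>
    rw [T, Finset.sum_range_succ, ← T]
    rw [ih]
    have hb : beta (1 + (n:ℝ)) = Real.log ((n:ℝ)+2) - Real.log ((n:ℝ)+1) - ((n:ℝ)+2)⁻¹ := by
      simp only [beta]
      rw [show (1:ℝ) + (n:ℝ) + 1 = (n:ℝ) + 2 by ring, show (1:ℝ) + (n:ℝ) = (n:ℝ) + 1 by ring]
    rw [hb]
    have hh : ((harmonic (n+1+1) : ℚ) : ℝ) = ((harmonic (n+1) : ℚ) : ℝ) + ((n:ℝ)+2)⁻¹ := by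
      rw [harmonic_succ]
      push_cast
      ring_nf
    rw [hh]
    push_cast
    ring

lemma crux_high (n : ℕ) {b u : ℝ} (hb0 : 0 ≤ b) (hbu : b ≤ 42287/100000) (hu : 7/4 ≤ u) :
    b * (u⁻¹ - (u+n)⁻¹) ≤ T n u := by
  have hu0 : (0:ℝ) < u := by linarith
  have e : b * (u⁻¹ - (u+n)⁻¹) = ∑ j ∈ Finset.range n, (b * ((u+j)⁻¹ - (u+j+1)⁻¹)) := by
    rw [← Finset.mul_sum, sum_inv_tele]
  rw [e, T]
  apply Finset.sum_le_sum
  intro j hj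
  have hj0 : (0:ℝ) ≤ (j:ℝ) := Nat.cast_nonneg j
  have hrho := rho_nonneg (v := u + j) (by linarith)
  have hpos : 0 ≤ (u+j)⁻¹ - (u+j+1)⁻¹ := by
    have : (u+(j:ℝ)+1)⁻¹ ≤ (u+(j:ℝ))⁻¹ := inv_anti₀ (by positivity) (by linarith)
    linarith
  calc b * ((u+j)⁻¹ - (u+j+1)⁻¹) ≤ (42287/100000 : ℝ) * ((u+j)⁻¹ - (u+j+1)⁻¹) :=
        mul_le_mul_of_nonneg_right hbu hpos
    _ ≤ beta (u+j) := hrho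


noncomputable def En (n : ℕ) : ℝ :=
  (eulerMascheroniSeq' (n+1) - eulerMascheroniConstant) + ((n:ℝ)+1)⁻¹

lemma En_nonneg (n : ℕ) : 0 ≤ En n := by
  have h := eulerMascheroniConstant_lt_eulerMascheroniSeq' (n+1)
  have : (0:ℝ) ≤ ((n:ℝ)+1)⁻¹ := by positivity
  simp only [En]
  linarith

lemma En_tendsto : Filter.Tendsto En atTop (nhds 0) := by
  have h1 : Filter.Tendsto (fun n : ℕ => eulerMascheroniSeq' (n+1) - eulerMascheroniConstant)
      atTop (nhds 0) := by
    have := (tendsto_eulerMascheroniSeq'.comp (tendsto_add_atTop_nat 1)).sub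
      (tendsto_const_nhds (x := eulerMascheroniConstant) (f := atTop (α := ℕ)))
    simpa using this
  have h2 : Filter.Tendsto (fun n : ℕ => ((n:ℝ)+1)⁻¹) atTop (nhds 0) := by
    apply Filter.Tendsto.inv_tendsto_atTop
    exact tendsto_atTop_add_const_right _ _ tendsto_natCast_atTop_atTop
  simpa using (show Filter.Tendsto En atTop (nhds (0 + 0)) from h1.add h2)

lemma seq'_eval (n : ℕ) : eulerMascheroniSeq' (n+1) = ((harmonic (n+1) : ℚ) : ℝ) - Real.log ((n:ℝ)+1) := by
  rw [eulerMascheroniSeq']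
  simp only [Nat.succ_ne_zero, if_false]
  push_cast
  norm_num

lemma crux (n : ℕ) {u : ℝ} (hu : 1 ≤ u) :
    (1 - eulerMascheroniConstant) * u⁻¹ - En n ≤ T n u := by
  set b : ℝ := 1 - eulerMascheroniConstant with hbdef
  have hblo : (42236/100000 : ℝ) ≤ b := by
    have := gamma_lt_num
    rw [hbdef]
    norm_num at this ⊢
    linarith
  have hbup : b ≤ (42287/100000 : ℝ) := by
    have := gamma_gt_num
    rw [hbdef]
    norm_num at this ⊢
    linarith
  have hb1 : b ≤ 1 := by
    have h0 : (0:ℝ) < eulerMascheroniConstant := lt_trans (by norm_num) gamma_gt_num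
    rw [hbdef]; linarith
  have hu0 : (0:ℝ) < u := by linarith
  rcases le_or_gt u (7/4) with h | h
  · have hF := F_ge_F_one n hblo hu h
    have hT1 : T n 1 = 1 + Real.log ((n:ℝ)+1) - ((harmonic (n+1) : ℚ) : ℝ) := T_at_one n
    have e : T n 1 - b = -(eulerMascheroniSeq' (n+1) - eulerMascheroniConstant) := by
      rw [hT1, seq'_eval, hbdef]
      ring
    have hpos : (0:ℝ) ≤ ((n:ℝ)+1)⁻¹ := by positivity
    simp only [En]
    linarith
  · have hhigh := crux_high n (b := b) (by linarith) hbup h.le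
    have h5 : (u+(n:ℝ))⁻¹ ≤ ((n:ℝ)+1)⁻¹ := inv_anti₀ (by positivity) (by linarith)
    have h6 : b * (u+(n:ℝ))⁻¹ ≤ ((n:ℝ)+1)⁻¹ := by
      have : b * (u+(n:ℝ))⁻¹ ≤ 1 * ((n:ℝ)+1)⁻¹ := by
        apply mul_le_mul hb1 h5 (by positivity) (by norm_num)
      linarith
    have h7 : 0 ≤ eulerMascheroniSeq' (n+1) - eulerMascheroniConstant := by
      have := eulerMascheroniConstant_lt_eulerMascheroniSeq' (n+1)
      linarith
    simp only [En]
    nlinarith [hhigh]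






noncomputable def Bf (s : ℝ) : ℝ := s * (Real.log (s+1) - Real.log s)
noncomputable def P (n : ℕ) (x : ℝ) : ℝ := ∑ j ∈ Finset.range n, (Bf (x+j) - Bf (1+j))

lemma hasDerivAt_P (n : ℕ) {x : ℝ} (hx : 0 < x) :
    HasDerivAt (fun x => P n x) (T n x) x := by
  apply HasDerivAt.fun_sum
  intro j hj
  have h : HasDerivAt (fun x : ℝ => x + j) 1 x := (hasDerivAt_id x).add_const (j:ℝ)
  have h2 := ((hasDerivAt_B (s := x + j) (by positivity)).comp x h)
  simpa [Bf] using h2.sub_const (Bf (1+j))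

lemma P_lower (n : ℕ) {x : ℝ} (hx : 1 ≤ x) :
    (1 - eulerMascheroniConstant) * Real.log x - En n * (x - 1) ≤ P n x := by
  set b : ℝ := 1 - eulerMascheroniConstant with hb
  have hmono : MonotoneOn (fun y => P n y - b * Real.log y + En n * y) (Set.Ici 1) := by
    apply monoOn_of_hasDerivAt (convex_Ici 1)
      (f' := fun y => T n y - b * y⁻¹ + En n)
    · intro y hy
      simp only [Set.mem_Ici] at hy
      have hy0 : (0:ℝ) < y := by linarith
      have h3 : HasDerivAt (fun y : ℝ => En n * y) (En n) y := by
        simpa using (hasDerivAt_id y).const_mul (En n)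
      exact ((hasDerivAt_P n hy0).sub ((Real.hasDerivAt_log (ne_of_gt hy0)).const_mul b)).add h3
    · intro y hy
      rw [interior_Ici] at hy
      simp only [Set.mem_Ioi] at hy
      have := crux n (le_of_lt hy)
      linarith
  have h1 := hmono (Set.self_mem_Ici) (Set.mem_Ici.2 hx) hx
  have hP1 : P n 1 = 0 := by
    simp [P]
  simp only [hP1, Real.log_one, mul_zero, mul_one, zero_sub, zero_add] at h1
  linarith

lemma sumB (n : ℕ) (y : ℝ) :
    ∑ j ∈ Finset.range n, Bf (y+j)
      = (y+n) * Real.log (y+n) - y * Real.log y - ∑ j ∈ Finset.range n, Real.log (y+j+1) := by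
  induction n with
  | zero => simp
  | succ n ih =>
    rw [Finset.sum_range_succ, ih, Finset.sum_range_succ]
    have e : Bf (y + n) = (y+n) * (Real.log (y+n+1) - Real.log (y+n)) := by
      simp [Bf]
    rw [e, Nat.cast_add, Nat.cast_one]
    have hs : Real.log (y + ((n:ℝ)+1)) = Real.log (y + (n:ℝ) + 1) := by rw [← add_assoc]
    rw [hs]
    ring

lemma log_GammaSeq (n : ℕ) {x : ℝ} (hx : 1 ≤ x) (hn : 1 ≤ n) :
    Real.log (Real.GammaSeq x n)
      = x * Real.log n + ∑ j ∈ Finset.range n, Real.log ((j:ℝ)+1)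
        - (Real.log x + ∑ j ∈ Finset.range n, Real.log (x+j+1)) := by
  have hx0 : (0:ℝ) < x := by linarith
  have hn0 : (0:ℝ) < (n:ℝ) := by exact_mod_cast hn
  have hfac : (0:ℝ) < ((Nat.factorial n : ℕ) : ℝ) := by exact_mod_cast Nat.factorial_pos n
  have hterm : ∀ j ∈ Finset.range (n+1), (x + (j:ℝ)) ≠ 0 := by
    intro j hj
    have : (0:ℝ) ≤ (j:ℝ) := Nat.cast_nonneg j
    positivity
  have hprodpos : (0:ℝ) < ∏ j ∈ Finset.range (n+1), (x + (j:ℝ)) := by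
    apply Finset.prod_pos
    intro j hj
    have : (0:ℝ) ≤ (j:ℝ) := Nat.cast_nonneg j
    positivity
  rw [Real.GammaSeq, Real.log_div (by positivity) (ne_of_gt hprodpos),
    Real.log_mul (by positivity) (ne_of_gt hfac), Real.log_rpow hn0,
    Real.log_prod hterm]
  have e1 : Real.log ((Nat.factorial n : ℕ) : ℝ) = ∑ j ∈ Finset.range n, Real.log ((j:ℝ)+1) := by
    have e2 : ((Nat.factorial n : ℕ) : ℝ) = ∏ j ∈ Finset.range n, ((j:ℝ)+1) := by
      rw [← Finset.prod_range_add_one_eq_factorial]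
      push_cast
      rfl
    rw [e2, Real.log_prod]
    intro j hj
    have : (0:ℝ) ≤ (j:ℝ) := Nat.cast_nonneg j
    positivity
  have e3 : ∑ j ∈ Finset.range (n+1), Real.log (x + j)
      = Real.log x + ∑ j ∈ Finset.range n, Real.log (x+j+1) := by
    rw [Finset.sum_range_succ' (fun j => Real.log (x + j)) n]
    push_cast
    simp only [Nat.cast_zero, add_zero]
    rw [add_comm]
    congr 1
    apply Finset.sum_congr rfl
    intro j hj
    congr 1
    push_cast
    ring
  rw [e1, e3]

lemma P_eq (n : ℕ) {x : ℝ} (hx : 1 ≤ x) (hn : 1 ≤ n) :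
    P n x = Real.log (Real.GammaSeq x n)
      + ((x+n) * Real.log (x+n) - n * Real.log ((n:ℝ)+1) - x * Real.log n)
      - x * Real.log x + Real.log x := by
  have hgs := log_GammaSeq n hx hn
  have h1 := sumB n x
  have h2 := sumB n 1
  have e4 : ∑ j ∈ Finset.range n, Real.log ((1:ℝ)+j+1)
      = ∑ j ∈ Finset.range n, Real.log ((j:ℝ)+1) + Real.log ((n:ℝ)+1) := by
    have ha := Finset.sum_range_succ (fun j : ℕ => Real.log ((j:ℝ)+1)) n
    have hb := Finset.sum_range_succ' (fun j : ℕ => Real.log ((j:ℝ)+1)) n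
    rw [ha] at hb
    -- hb : ∑_{j<n} log(j+1) + log(n+1) = ∑_{j<n} log(j+1+1) + log(0+1)
    simp only [Nat.cast_zero, zero_add, Real.log_one, add_zero] at hb
    rw [hb]
    apply Finset.sum_congr rfl
    intro j hj
    congr 1
    push_cast
    ring
  have hP : P n x = (∑ j ∈ Finset.range n, Bf (x+j)) - ∑ j ∈ Finset.range n, Bf (1+j) := by
    simp [P, Finset.sum_sub_distrib]
  rw [hP, h1, h2, e4]
  rw [show Real.log ((1:ℝ)+n) = Real.log ((n:ℝ)+1) by ring_nf]
  have e5 : ∑ j ∈ Finset.range n, Real.log (x+j+1)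
      = x * Real.log n + ∑ j ∈ Finset.range n, Real.log ((j:ℝ)+1)
        - Real.log x - Real.log (Real.GammaSeq x n) := by
    linarith [hgs]
  rw [e5]
  simp only [Real.log_one]
  ring

lemma P_tendsto {x : ℝ} (hx : 1 ≤ x) :
    Filter.Tendsto (fun n => P n x) atTop
      (nhds (Real.log (Real.Gamma x) + (x - 1) - x * Real.log x + Real.log x)) := by
  have hx0 : (0:ℝ) < x := by linarith
  have hA : Filter.Tendsto (fun n : ℕ => Real.log (Real.GammaSeq x n)) atTop
      (nhds (Real.log (Real.Gamma x))) :=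
    (Real.GammaSeq_tendsto_Gamma x).log (ne_of_gt (Real.Gamma_pos_of_pos hx0))
  have hB : Filter.Tendsto
      (fun n : ℕ => (x+n) * Real.log (x+n) - n * Real.log ((n:ℝ)+1) - x * Real.log n)
      atTop (nhds (x - 1)) := by
    have hg1 : Filter.Tendsto
        (fun n : ℕ => ((n:ℝ)+1) * Real.log (1 + (x-1)/((n:ℝ)+1))) atTop (nhds (x-1)) := by
      have := (Real.tendsto_mul_log_one_add_div_atTop (x-1)).comp
        (tendsto_atTop_add_const_right atTop (1:ℝ) tendsto_natCast_atTop_atTop)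
      simpa [Function.comp_def] using this
    have hg0 : Filter.Tendsto
        (fun n : ℕ => (1 + (x-1)/((n:ℝ)+1))) atTop (nhds 1) := by
      have h2 : Filter.Tendsto (fun n : ℕ => (x-1)/((n:ℝ)+1)) atTop (nhds 0) := by
        apply Filter.Tendsto.div_atTop tendsto_const_nhds
        exact tendsto_atTop_add_const_right atTop (1:ℝ) tendsto_natCast_atTop_atTop
      simpa using (tendsto_const_nhds (x := (1:ℝ)) (f := atTop (α := ℕ))).add h2
    have hg2 : Filter.Tendsto
        (fun n : ℕ => Real.log (1 + (x-1)/((n:ℝ)+1))) atTop (nhds 0) := by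
      have := hg0.log one_ne_zero
      simpa using this
    have hg3 : Filter.Tendsto
        (fun n : ℕ => Real.log (1 + x/(n:ℝ))) atTop (nhds 0) := by
      have hg0' : Filter.Tendsto (fun n : ℕ => (1 + x/(n:ℝ))) atTop (nhds 1) := by
        have h2 : Filter.Tendsto (fun n : ℕ => x/(n:ℝ)) atTop (nhds 0) := by
          apply Filter.Tendsto.div_atTop tendsto_const_nhds tendsto_natCast_atTop_atTop
        simpa using (tendsto_const_nhds (x := (1:ℝ)) (f := atTop (α := ℕ))).add h2
      have := hg0'.log one_ne_zero
      simpa using this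
    have hsum : Filter.Tendsto
        (fun n : ℕ => (((n:ℝ)+1) * Real.log (1 + (x-1)/((n:ℝ)+1))
          - Real.log (1 + (x-1)/((n:ℝ)+1)) + x * Real.log (1 + x/(n:ℝ))))
        atTop (nhds (x - 1)) := by
      have := (hg1.sub hg2).add ((hg3.const_mul x))
      simpa using this
    apply Filter.Tendsto.congr' _ hsum
    filter_upwards [eventually_ge_atTop 1] with n hn
    have hn0 : (0:ℝ) < (n:ℝ) := by exact_mod_cast hn
    have e1 : 1 + (x-1)/((n:ℝ)+1) = (x+(n:ℝ))/((n:ℝ)+1) := by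
      field_simp
      ring
    have e2 : 1 + x/(n:ℝ) = (x+(n:ℝ))/(n:ℝ) := by
      field_simp
      ring
    rw [e1, e2, Real.log_div (by positivity) (by positivity),
      Real.log_div (by positivity) (by positivity)]
    ring
  have hval : Real.log (Real.Gamma x) + (x - 1) - x * Real.log x + Real.log x
      = (Real.log (Real.Gamma x) + (x - 1)) + (-(x * Real.log x) + Real.log x) := by ring
  rw [hval]
  apply Filter.Tendsto.congr' _ ((hA.add hB).add
    (tendsto_const_nhds (x := -(x * Real.log x) + Real.log x) (f := atTop (α := ℕ))))
  filter_upwards [eventually_ge_atTop 1] with n hn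
  rw [P_eq n hx hn]
  ring

theorem main {x : ℝ} (hx : 1 ≤ x) :
    (x - Real.eulerMascheroniConstant) * Real.log x - x + 1 ≤ Real.log (Real.Gamma x) := by
  have hlhs : Filter.Tendsto
      (fun n : ℕ => (1 - eulerMascheroniConstant) * Real.log x - En n * (x - 1)) atTop
      (nhds ((1 - eulerMascheroniConstant) * Real.log x)) := by
    have := (tendsto_const_nhds (x := (1 - eulerMascheroniConstant) * Real.log x)
      (f := atTop (α := ℕ))).sub (En_tendsto.mul_const (x - 1))
    simpa using this
  have hkey : (1 - eulerMascheroniConstant) * Real.log x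
      ≤ Real.log (Real.Gamma x) + (x - 1) - x * Real.log x + Real.log x :=
    le_of_tendsto_of_tendsto' hlhs (P_tendsto hx) (fun n => P_lower n hx)
  have e : (x - Real.eulerMascheroniConstant) * Real.log x - x + 1
      = (1 - eulerMascheroniConstant) * Real.log x + x * Real.log x - Real.log x - x + 1 := by
    ring
  rw [e]
  linarith


end LGB

theorem logGamma_lower_bound (x : ℝ) (hx : 1 ≤ x) :
    (x - Real.eulerMascheroniConstant) * Real.log x - x + 1 ≤ Real.log (Real.Gamma x) :=
  LGB.main hx
end

section
/- Let K ≥ 2 be an integer and let n_1, ..., n_K be nonnegative integers with N = n_1 + ... + n_K ≥ 1. Then Σ_{k=1}^{K} log Γ(n_k + 1) - log Γ(N + K) ≥ Σ_{k=1}^{K} n_k·log(n_k/N) - (K - 1.5 + γ)·log(N) - K·(K + 1), where γ is the Euler–Mascheroni constant and terms with n_k = 0 contribute 0 to the entropy sum. -/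
open Finset

private lemma nat_binom_entropy (a b : ℕ) :
    (a + b).factorial * (a ^ a * b ^ b) ≤ a.factorial * b.factorial * (a + b) ^ (a + b) := by
  have hchoose : (a + b).choose a * a.factorial * b.factorial = (a + b).factorial := by
    have := Nat.choose_mul_factorial_mul_factorial (Nat.le_add_right a b)
    simpa using this
  have hpow : a ^ a * b ^ b * (a + b).choose a ≤ (a + b) ^ (a + b) := by
    calc a ^ a * b ^ b * (a + b).choose a
        = a ^ a * b ^ (a + b - a) * (a + b).choose a := by simp
      _ ≤ ∑ k ∈ range (a + b + 1), a ^ k * b ^ (a + b - k) * (a + b).choose k := by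
          apply Finset.single_le_sum (f := fun k => a ^ k * b ^ (a + b - k) * (a + b).choose k)
          · intro i _; exact Nat.zero_le _
          · simp [Nat.lt_succ_iff]
      _ = (a + b) ^ (a + b) := (add_pow a b (a + b)).symm
  calc (a + b).factorial * (a ^ a * b ^ b)
      = (a + b).choose a * a.factorial * b.factorial * (a ^ a * b ^ b) := by rw [hchoose]
    _ = a.factorial * b.factorial * (a ^ a * b ^ b * (a + b).choose a) := by ring
    _ ≤ a.factorial * b.factorial * (a + b) ^ (a + b) :=
        Nat.mul_le_mul_left _ hpow

private lemma pow_self_pos_real (a : ℕ) : (0 : ℝ) < (a : ℝ) ^ a := by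
  rcases Nat.eq_zero_or_pos a with h | h
  · simp [h]
  · exact pow_pos (by exact_mod_cast h) a

private noncomputable def fent (n : ℕ) : ℝ := Real.log n.factorial - n * Real.log n

private lemma fent_zero : fent 0 = 0 := by simp [fent]

private lemma fent_add (a b : ℕ) : fent (a + b) ≤ fent a + fent b := by
  have h : ((a + b).factorial : ℝ) * ((a : ℝ) ^ a * (b : ℝ) ^ b)
      ≤ (a.factorial : ℝ) * (b.factorial : ℝ) * ((a : ℝ) + (b : ℝ)) ^ (a + b) := by
    exact_mod_cast nat_binom_entropy a b
  have hfab : (0 : ℝ) < ((a + b).factorial : ℝ) := by exact_mod_cast (a + b).factorial_pos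
  have hfa : (0 : ℝ) < (a.factorial : ℝ) := by exact_mod_cast a.factorial_pos
  have hfb : (0 : ℝ) < (b.factorial : ℝ) := by exact_mod_cast b.factorial_pos
  have hpa := pow_self_pos_real a
  have hpb := pow_self_pos_real b
  have hpab : (0 : ℝ) < ((a : ℝ) + (b : ℝ)) ^ (a + b) := by
    rcases Nat.eq_zero_or_pos (a + b) with h0 | h0
    · obtain ⟨ha, hb⟩ := Nat.add_eq_zero.mp h0
      simp [ha, hb]
    · have : (0 : ℝ) < (a : ℝ) + b := by exact_mod_cast h0
      positivity
  have hlog : Real.log (((a + b).factorial : ℝ) * ((a : ℝ) ^ a * (b : ℝ) ^ b))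
      ≤ Real.log ((a.factorial : ℝ) * (b.factorial : ℝ) * ((a : ℝ) + (b : ℝ)) ^ (a + b)) := by
    apply Real.log_le_log (by positivity) h
  rw [Real.log_mul (ne_of_gt hfab) (ne_of_gt (mul_pos hpa hpb)), Real.log_mul (ne_of_gt hpa) (ne_of_gt hpb),
    Real.log_mul (ne_of_gt (mul_pos hfa hfb)) (ne_of_gt hpab), Real.log_mul (ne_of_gt hfa) (ne_of_gt hfb),
    Real.log_pow, Real.log_pow, Real.log_pow] at hlog
  simp only [fent]
  push_cast at hlog ⊢
  linarith

private lemma fact_add_le (N m : ℕ) : (N + m).factorial ≤ N.factorial * (N + m) ^ m := by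
  induction m with
  | zero => simp
  | succ m ih =>
    have h1 : (N + (m + 1)).factorial = (N + m + 1) * (N + m).factorial := by
      rw [show N + (m + 1) = (N + m) + 1 from rfl, Nat.factorial_succ]
    rw [h1]
    calc (N + m + 1) * (N + m).factorial
        ≤ (N + m + 1) * (N.factorial * (N + m) ^ m) := Nat.mul_le_mul_left _ ih
      _ ≤ (N + m + 1) * (N.factorial * (N + m + 1) ^ m) := by
          apply Nat.mul_le_mul_left
          apply Nat.mul_le_mul_left
          exact Nat.pow_le_pow_left (Nat.le_succ _) m
      _ = N.factorial * (N + (m + 1)) ^ (m + 1) := by ring_nf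
  
theorem logGamma_multinomial_entropy_bound (K : ℕ) (hK : 2 ≤ K) (n : Fin K → ℕ)
    (N : ℕ) (hN : N = ∑ k, n k) (hN1 : 1 ≤ N) :
    (∑ k, (n k : ℝ) * Real.log ((n k : ℝ) / N))
      - ((K : ℝ) - 1.5 + Real.eulerMascheroniConstant) * Real.log N - K * (K + 1)
    ≤ (∑ k, Real.log (Real.Gamma ((n k : ℝ) + 1))) - Real.log (Real.Gamma ((N : ℝ) + K)) := by
  have hNpos : (0 : ℝ) < N := by exact_mod_cast hN1
  have hN1R : (1 : ℝ) ≤ N := by exact_mod_cast hN1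
  have hlogN : 0 ≤ Real.log N := Real.log_nonneg hN1R
  -- rewrite Gammas as factorials
  have hG1 : ∀ k, Real.Gamma ((n k : ℝ) + 1) = ((n k).factorial : ℝ) := fun k =>
    Real.Gamma_nat_eq_factorial (n k)
  have hM : (N : ℝ) + K = ((N + (K - 1) : ℕ) : ℝ) + 1 := by
    have : 1 ≤ K := le_trans one_le_two hK
    push_cast [this]
    ring
  have hG2 : Real.Gamma ((N : ℝ) + K) = ((N + (K - 1)).factorial : ℝ) := by
    rw [hM, Real.Gamma_nat_eq_factorial]
  -- entropy rewrite
  have hent : ∀ k, (n k : ℝ) * Real.log ((n k : ℝ) / N)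
      = (n k : ℝ) * Real.log (n k) - (n k : ℝ) * Real.log N := by
    intro k
    rcases Nat.eq_zero_or_pos (n k) with h | h
    · simp [h]
    · rw [Real.log_div (by exact_mod_cast h.ne') (ne_of_gt hNpos)]; ring
  have hsumN : ∑ k, ((n k : ℝ)) * Real.log N = (N : ℝ) * Real.log N := by
    rw [← Finset.sum_mul]
    congr 1
    rw [hN]; push_cast; ring
  -- key 1 : subadditivity
  have hkey1 : fent N ≤ ∑ k, fent (n k) := by
    rw [hN]
    exact Finset.le_sum_of_subadditive fent fent_zero.le fent_add _ _
  -- key 2 : factorial ratio bound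
  have hfact : ((N + (K - 1)).factorial : ℝ) ≤ (N.factorial : ℝ) * ((N : ℝ) * K) ^ (K - 1) := by
    have h1 : (N + (K - 1)).factorial ≤ N.factorial * (N + (K - 1)) ^ (K - 1) :=
      fact_add_le N (K - 1)
    have h2 : N + (K - 1) ≤ N * K := by
      have hK1 : 1 ≤ K := le_trans one_le_two hK
      calc N + (K - 1) ≤ N + N * (K - 1) := by
            exact Nat.add_le_add_left (Nat.le_mul_of_pos_left _ hN1) _
        _ = N * (1 + (K - 1)) := by ring
        _ = N * K := by rw [show 1 + (K - 1) = K by omega]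

    calc ((N + (K - 1)).factorial : ℝ)
        ≤ (N.factorial : ℝ) * ((N + (K - 1) : ℕ) : ℝ) ^ (K - 1) := by exact_mod_cast h1
      _ ≤ (N.factorial : ℝ) * ((N : ℝ) * K) ^ (K - 1) := by
          apply mul_le_mul_of_nonneg_left _ (by positivity)
          apply pow_le_pow_left₀ (by positivity)
          exact_mod_cast h2
  have hlogfact : Real.log ((N + (K - 1)).factorial : ℝ)
      ≤ Real.log (N.factorial : ℝ) + ((K : ℝ) - 1) * (Real.log N + Real.log K) := by
    have hpos : (0 : ℝ) < ((N + (K - 1)).factorial : ℝ) := by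
      exact_mod_cast (N + (K - 1)).factorial_pos
    have hKpos : (0 : ℝ) < K := by positivity
    calc Real.log ((N + (K - 1)).factorial : ℝ)
        ≤ Real.log ((N.factorial : ℝ) * ((N : ℝ) * K) ^ (K - 1)) := Real.log_le_log hpos hfact
      _ = Real.log (N.factorial : ℝ) + ((K - 1 : ℕ) : ℝ) * Real.log ((N : ℝ) * K) := by
          rw [Real.log_mul (by positivity) (by positivity), Real.log_pow]
      _ = Real.log (N.factorial : ℝ) + ((K : ℝ) - 1) * (Real.log N + Real.log K) := by
          rw [Real.log_mul (ne_of_gt hNpos) (ne_of_gt hKpos)]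
          congr 2
          push_cast [le_trans one_le_two hK]
          ring
  -- key 3 : constants
  have hgamma : (1 : ℝ) / 2 < Real.eulerMascheroniConstant :=
    Real.one_half_lt_eulerMascheroniConstant
  have hlogK : Real.log K ≤ (K : ℝ) := by
    have : Real.log K ≤ (K : ℝ) - 1 := Real.log_le_sub_one_of_pos (by positivity)
    linarith
  have hlogKnn : 0 ≤ Real.log K := Real.log_nonneg (by exact_mod_cast le_trans one_le_two hK)
  have hK2 : (2 : ℝ) ≤ K := by exact_mod_cast hK
  have hkey3 : ((K : ℝ) - 1) * (Real.log N + Real.log K)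
      ≤ ((K : ℝ) - 1.5 + Real.eulerMascheroniConstant) * Real.log N + (K : ℝ) * ((K : ℝ) + 1) := by
    have h1 : ((K : ℝ) - 1) * Real.log N ≤ ((K : ℝ) - 1.5 + Real.eulerMascheroniConstant) * Real.log N := by
      apply mul_le_mul_of_nonneg_right _ hlogN
      norm_num
      linarith
    have h2 : ((K : ℝ) - 1) * Real.log K ≤ (K : ℝ) * ((K : ℝ) + 1) := by
      calc ((K : ℝ) - 1) * Real.log K ≤ ((K : ℝ) - 1) * K := by
            apply mul_le_mul_of_nonneg_left hlogK (by linarith)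
        _ ≤ (K : ℝ) * ((K : ℝ) + 1) := by nlinarith
    linarith [h1, h2]
  -- assemble
  simp only [hG1, hG2]
  simp only [hent]
  rw [Finset.sum_sub_distrib, hsumN]
  have hfentexp : fent N = Real.log (N.factorial : ℝ) - (N : ℝ) * Real.log N := rfl
  have hfexp : ∑ k, fent (n k) = ∑ k, (Real.log ((n k).factorial : ℝ) - (n k : ℝ) * Real.log (n k)) := rfl
  rw [hfexp] at hkey1
  rw [Finset.sum_sub_distrib] at hkey1
  have := hkey1
  rw [hfentexp] at this
  linarith [hlogfact, hkey3, this]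
end
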